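/- If p : E → B is an arc-hedgehog covering, then p is a disk-hedgehog covering if and only if p is a disk-covering (i.e., maps from the 2-disk lift uniquely). -/

import Mathlib

open unitInterval Topology

set_option linter.unnecessarySimpa false

universe u v w

/-- `p : E → B` is an arc-covering: unique lifting of paths given the initial point. -/
def IsArcCovering {E : Type*} {B : Type*} [TopologicalSpace E] [TopologicalSpace B]
    (p : C(E, B)) : Prop :=
  ∀ (e₀ : E) (f : C(I, B)), f 0 = p e₀ →
    ∃! g : C(I, E), p.comp g = f ∧ g 0 = e₀

/-- The relation identifying the wedge points of a wedge of copies of `(A, a₀)` indexed by `S`. -/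
def wedgeRel (S A : Type*) (a₀ : A) (x y : S × A) : Prop :=
  x = y ∨ (x.2 = a₀ ∧ y.2 = a₀)

/-- The wedge (one-point union) of copies of `(A, a₀)` indexed by `S`. -/
def Wedge (S A : Type*) (a₀ : A) : Type _ :=
  Quot (wedgeRel S A a₀)

/-- The topology of a directed wedge: a set is open iff its trace on each copy of `A`
is open, and if it contains the wedge point then it contains all copies of `A`
beyond some index. -/
instance Wedge.instTopologicalSpace (S A : Type*) (a₀ : A) [Preorder S]
    [IsDirected S (· ≤ ·)] [TopologicalSpace A] : TopologicalSpace (Wedge S A a₀) where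
  IsOpen U := (∀ s : S, IsOpen {a : A | Quot.mk (wedgeRel S A a₀) (s, a) ∈ U}) ∧
    ((∃ s : S, Quot.mk (wedgeRel S A a₀) (s, a₀) ∈ U) →
      ∃ t : S, ∀ s : S, t < s → ∀ a : A, Quot.mk (wedgeRel S A a₀) (s, a) ∈ U)
  isOpen_univ := by
    refine ⟨fun s => ?_, fun h => ?_⟩
    · convert (isOpen_univ (X := A)) using 1
      exact Set.eq_univ_of_forall fun _ => trivial
    · obtain ⟨s, -⟩ := h
      exact ⟨s, fun _ _ _ => trivial⟩
  isOpen_inter := by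
    rintro U V ⟨hU1, hU2⟩ ⟨hV1, hV2⟩
    refine ⟨fun s => (hU1 s).inter (hV1 s), fun h => ?_⟩
    obtain ⟨tU, htU⟩ := hU2 ⟨h.choose, h.choose_spec.1⟩
    obtain ⟨tV, htV⟩ := hV2 ⟨h.choose, h.choose_spec.2⟩
    obtain ⟨t, ht1, ht2⟩ := directed_of (· ≤ ·) tU tV
    exact ⟨t, fun s hs a => ⟨htU s (lt_of_le_of_lt ht1 hs) a, htV s (lt_of_le_of_lt ht2 hs) a⟩⟩
  isOpen_sUnion := by
    intro C hC
    constructor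
    · intro s
      have : {a : A | Quot.mk (wedgeRel S A a₀) (s, a) ∈ ⋃₀ C} =
          ⋃ U ∈ C, {a : A | Quot.mk (wedgeRel S A a₀) (s, a) ∈ U} := by
        ext a
        simp only [Set.mem_setOf_eq, Set.mem_sUnion, Set.mem_iUnion, exists_prop]
        exact Iff.rfl
      rw [this]
      exact isOpen_biUnion fun U hU => (hC U hU).1 s
    · rintro ⟨s, hs⟩
      obtain ⟨U, hUC, hsU⟩ := hs
      obtain ⟨t, ht⟩ := (hC U hUC).2 ⟨s, hsU⟩
      exact ⟨t, fun s' hs' a => ⟨U, hUC, ht s' hs' a⟩⟩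

/-- An arc-hedgehog over a directed set `S`: the directed wedge of copies of `([0,1], 0)`. -/
def ArcHedgehog (S : Type*) : Type _ := Wedge S I 0

instance (S : Type*) [Preorder S] [IsDirected S (· ≤ ·)] : TopologicalSpace (ArcHedgehog S) :=
  Wedge.instTopologicalSpace S I 0

/-- `p` is an arc-hedgehog covering: maps from arc-hedgehogs lift uniquely. -/
def IsArcHedgehogCovering {E : Type*} {B : Type*} [TopologicalSpace E] [TopologicalSpace B]
    (p : C(E, B)) : Prop :=
  ∀ (S : Type u) [Preorder S] [IsDirected S (· ≤ ·)],
    ∀ (e₀ : E) (f : C(ArcHedgehog S, B)) (z₀ : ArcHedgehog S), f z₀ = p e₀ →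
      ∃! g : C(ArcHedgehog S, E), p.comp g = f ∧ g z₀ = e₀

/-- The closed unit `2`-disk. -/
noncomputable def Disk : Type := Metric.closedBall (0 : EuclideanSpace ℝ (Fin 2)) 1

noncomputable instance : TopologicalSpace Disk := by unfold Disk; infer_instance

/-- The center of the disk. -/
noncomputable def Disk.center : Disk := ⟨0, by simp⟩

/-- A disk-hedgehog over a directed set `S`: the directed wedge of copies of the pointed disk. -/
def DiskHedgehog (S : Type*) : Type _ := Wedge S Disk Disk.center

noncomputable instance (S : Type*) [Preorder S] [IsDirected S (· ≤ ·)] : TopologicalSpace (DiskHedgehog S) :=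
  Wedge.instTopologicalSpace S Disk Disk.center

/-- `p` is a disk-hedgehog covering: maps from disk-hedgehogs lift uniquely. -/
def IsDiskHedgehogCovering {E : Type*} {B : Type*} [TopologicalSpace E] [TopologicalSpace B]
    (p : C(E, B)) : Prop :=
  ∀ (S : Type u) [Preorder S] [IsDirected S (· ≤ ·)],
    ∀ (e₀ : E) (f : C(DiskHedgehog S, B)) (z₀ : DiskHedgehog S), f z₀ = p e₀ →
      ∃! g : C(DiskHedgehog S, E), p.comp g = f ∧ g z₀ = e₀

/-- `p` is a disk-covering: maps from the closed `2`-disk lift uniquely. -/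
def IsDiskCovering {E : Type*} {B : Type*} [TopologicalSpace E] [TopologicalSpace B]
    (p : C(E, B)) : Prop :=
  ∀ (e₀ : E) (f : C(Disk, B)) (d₀ : Disk), f d₀ = p e₀ →
    ∃! g : C(Disk, E), p.comp g = f ∧ g d₀ = e₀

/-- Path components of preimages of neighborhoods form a neighborhood basis of the
total space. -/
def HedgehogBasisCondition {E : Type*} {B : Type*} [TopologicalSpace E] [TopologicalSpace B]
    (p : C(E, B)) : Prop :=
  ∀ (e₀ : E) (U : Set E), IsOpen U → e₀ ∈ U →
    ∃ V ∈ 𝓝 (p e₀), {y : E | JoinedIn (p ⁻¹' V) e₀ y} ⊆ U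

/-- The monodromy relation on loops at `b₀`: two loops are identified iff any two of
their lifts starting at the same point end at the same point. -/
def MonodromyRel {E : Type*} {B : Type*} [TopologicalSpace E] [TopologicalSpace B]
    (p : C(E, B)) (b₀ : B) (α β : Path b₀ b₀) : Prop :=
  ∀ g h : C(I, E), (∀ t, p (g t) = α t) → (∀ t, p (h t) = β t) →
    g 0 = h 0 → g 1 = h 1

/-- `p` is regular: for each loop in `B`, all lifts are loops or all lifts are non-loops. -/
def IsRegularCovering {E : Type*} {B : Type*} [TopologicalSpace E] [TopologicalSpace B]
    (p : C(E, B)) : Prop :=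
  ∀ (b : B) (α : Path b b) (g h : C(I, E)),
    (∀ t, p (g t) = α t) → (∀ t, p (h t) = α t) → g 0 = g 1 → h 0 = h 1

set_option linter.unusedSectionVars false
section WedgeAux

variable {S A : Type*} [Preorder S] [IsDirected S (· ≤ ·)] [TopologicalSpace A] {a₀ : A}

lemma Wedge.isOpen_iff {U : Set (Wedge S A a₀)} :
    IsOpen U ↔ (∀ s : S, IsOpen {a : A | Quot.mk (wedgeRel S A a₀) (s, a) ∈ U}) ∧
      ((∃ s : S, Quot.mk (wedgeRel S A a₀) (s, a₀) ∈ U) →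
        ∃ t : S, ∀ s : S, t < s → ∀ a : A, Quot.mk (wedgeRel S A a₀) (s, a) ∈ U) :=
  Iff.rfl

lemma Wedge.pt_eq (s s' : S) :
    (Quot.mk (wedgeRel S A a₀) (s, a₀)) = Quot.mk (wedgeRel S A a₀) (s', a₀) :=
  Quot.sound (Or.inr ⟨rfl, rfl⟩)

/-- The inclusion of the `s`-th copy of `A` into the wedge. -/
def Wedge.mkC (s : S) : C(A, Wedge S A a₀) :=
  ⟨fun a => Quot.mk (wedgeRel S A a₀) (s, a), by
    refine continuous_def.mpr ?_; intro U hU; exact (Wedge.isOpen_iff.mp hU).1 s⟩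

lemma Wedge.continuous_of {X : Type*} [TopologicalSpace X] {g : Wedge S A a₀ → X}
    (h1 : ∀ s : S, Continuous fun a : A => g (Quot.mk (wedgeRel S A a₀) (s, a)))
    (h2 : ∀ U : Set X, IsOpen U → ∀ s₀ : S, g (Quot.mk (wedgeRel S A a₀) (s₀, a₀)) ∈ U →
      ∃ t : S, ∀ s : S, t < s → ∀ a : A, g (Quot.mk (wedgeRel S A a₀) (s, a)) ∈ U) :
    Continuous g := by
  rw [continuous_def]
  intro U hU
  rw [Wedge.isOpen_iff]
  refine ⟨fun s => (h1 s).isOpen_preimage U hU, ?_⟩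
  rintro ⟨s, hs⟩
  exact h2 U hU s hs

/-- The wedge over a one-point index set is homeomorphic to `A`. -/
def Wedge.punitHomeo (A : Type v) [TopologicalSpace A] (a₀ : A) :
    Wedge PUnit.{w+1} A a₀ ≃ₜ A where
  toFun := Quot.lift Prod.snd (by
    rintro ⟨s, a⟩ ⟨s', a'⟩ (h | ⟨h1, h2⟩)
    · rw [h]
    · exact h1.trans h2.symm)
  invFun a := Quot.mk _ (PUnit.unit, a)
  left_inv := by
    rintro ⟨⟨s, a⟩⟩
    rfl
  right_inv a := rfl
  continuous_toFun := Wedge.continuous_of (fun s => continuous_id)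
    (fun U hU s₀ h => ⟨PUnit.unit, fun s hs => absurd hs (lt_irrefl _)⟩)
  continuous_invFun := (Wedge.mkC (S := PUnit.{w+1}) (a₀ := a₀) PUnit.unit).continuous

end WedgeAux

lemma existsUnique_lift_transfer {E B X Y : Type*} [TopologicalSpace E] [TopologicalSpace B]
    [TopologicalSpace X] [TopologicalSpace Y] (p : C(E, B)) (e : X ≃ₜ Y) (f : C(Y, B))
    (y₀ : Y) (e₀ : E)
    (h : ∃! g : C(X, E), p.comp g = f.comp (e : C(X, Y)) ∧ g (e.symm y₀) = e₀) :
    ∃! g : C(Y, E), p.comp g = f ∧ g y₀ = e₀ := by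
  obtain ⟨g, ⟨hg1, hg2⟩, hu⟩ := h
  refine ⟨g.comp (e.symm : C(Y, X)), ⟨?_, ?_⟩, ?_⟩
  · ext y
    have := ContinuousMap.congr_fun hg1 (e.symm y)
    simpa using this
  · exact hg2
  · rintro g' ⟨hg'1, hg'2⟩
    have key : g'.comp (e : C(X, Y)) = g := by
      refine hu _ ⟨?_, ?_⟩
      · ext x
        simpa using ContinuousMap.congr_fun hg'1 (e x)
      · simpa using hg'2
    ext y
    have := ContinuousMap.congr_fun key (e.symm y)
    simpa using this

@[simp] lemma Wedge.mkC_apply {S A : Type*} [Preorder S] [IsDirected S (· ≤ ·)]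
    [TopologicalSpace A] {a₀ : A} (s : S) (a : A) :
    Wedge.mkC (a₀ := a₀) s a = Quot.mk (wedgeRel S A a₀) (s, a) := rfl

lemma IsArcHedgehogCovering.isArcCovering {E B : Type u} [TopologicalSpace E]
    [TopologicalSpace B] {p : C(E, B)} (hp : IsArcHedgehogCovering.{u} p) :
    IsArcCovering p := by
  intro e₀ f hf
  refine existsUnique_lift_transfer p (Wedge.punitHomeo I 0 : Wedge PUnit.{u+1} I 0 ≃ₜ I) f 0 e₀ ?_
  exact hp PUnit.{u+1} e₀ (f.comp ((Wedge.punitHomeo I 0 : Wedge PUnit.{u+1} I 0 ≃ₜ I) : C(Wedge PUnit.{u+1} I 0, I)))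
    ((Wedge.punitHomeo I 0 : Wedge PUnit.{u+1} I 0 ≃ₜ I).symm 0) (by exact hf)

lemma IsDiskHedgehogCovering.isDiskCovering {E B : Type u} [TopologicalSpace E]
    [TopologicalSpace B] {p : C(E, B)} (hp : IsDiskHedgehogCovering.{u} p) :
    IsDiskCovering p := by
  intro e₀ f d₀ hf
  refine existsUnique_lift_transfer p
    (Wedge.punitHomeo Disk Disk.center : Wedge PUnit.{u+1} Disk Disk.center ≃ₜ Disk) f d₀ e₀ ?_
  exact hp PUnit.{u+1} e₀ (f.comp ((Wedge.punitHomeo Disk Disk.center : Wedge PUnit.{u+1} Disk Disk.center ≃ₜ Disk) :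
      C(Wedge PUnit.{u+1} Disk Disk.center, Disk)))
    ((Wedge.punitHomeo Disk Disk.center : Wedge PUnit.{u+1} Disk Disk.center ≃ₜ Disk).symm d₀) (by exact hf)

/-- The radial path in the disk from the center to `a`. -/
noncomputable def Disk.radial (a : Disk) : C(I, Disk) where
  toFun t := ⟨(t : ℝ) • a.1, by
    have h1 : ‖a.1‖ ≤ 1 := by
      have := a.2
      rwa [Metric.mem_closedBall, dist_zero_right] at this
    have ht : |(t : ℝ)| ≤ 1 := abs_le.mpr ⟨by linarith [t.2.1], t.2.2⟩
    rw [Metric.mem_closedBall, dist_zero_right, norm_smul]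
    calc ‖(t : ℝ)‖ * ‖a.1‖ ≤ 1 * 1 := by
          exact mul_le_mul ht h1 (norm_nonneg a.1) zero_le_one
      _ = 1 := one_mul 1⟩
  continuous_toFun := by
    apply Continuous.subtype_mk
    exact continuous_subtype_val.smul continuous_const

@[simp] lemma Disk.radial_zero (a : Disk) : Disk.radial a 0 = Disk.center := by
  apply Subtype.ext
  show ((0:I):ℝ) • a.1 = 0
  simp

@[simp] lemma Disk.radial_one (a : Disk) : Disk.radial a 1 = a := by
  apply Subtype.ext
  show ((1:I):ℝ) • a.1 = a.1
  simp

/-- The reversal map on the unit interval as a continuous map. -/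
def symmC : C(I, I) := ⟨unitInterval.symm, unitInterval.continuous_symm⟩

/-- an arc-hedgehog covering is a disk-hedgehog covering iff it is a
disk-covering. -/
theorem diskHedgehog_iff_disk {E B : Type u} [TopologicalSpace E] [TopologicalSpace B]
    (p : C(E, B)) (hp : IsArcHedgehogCovering.{u} p) :
    IsDiskHedgehogCovering.{u} p ↔ IsDiskCovering p := by
  constructor
  · exact fun h => h.isDiskCovering
  · intro hd
    have harc : IsArcCovering p := hp.isArcCovering
    intro S _ _ e₀ f z₀ hz₀
    obtain ⟨⟨s₀, a₀'⟩, rfl⟩ := Quot.exists_rep z₀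
    set w : DiskHedgehog S := Quot.mk _ (s₀, Disk.center) with hw
    set δ : C(I, Disk) := (Disk.radial a₀').comp symmC with hδ
    have hδ0 : δ 0 = a₀' := by simp [hδ, symmC]
    have hδ1 : δ 1 = Disk.center := by simp [hδ, symmC]
    obtain ⟨β, ⟨hβp, hβ0⟩, hβu⟩ :=
      harc e₀ ((f.comp (Wedge.mkC s₀)).comp δ) (show f (Quot.mk (wedgeRel S Disk Disk.center) (s₀, δ 0)) = p e₀ by rw [hδ0]; exact hz₀)
    set ec : E := β 1 with hec
    have hpec : p ec = f w := by
      have := ContinuousMap.congr_fun hβp 1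
      have h' : p (β 1) = f (Quot.mk (wedgeRel S Disk Disk.center) (s₀, δ 1)) := this
      rw [hδ1] at h'
      exact h'
    have hfs : ∀ s : S, (f.comp (Wedge.mkC s)) Disk.center = p ec := by
      intro s
      have h1 : Quot.mk (wedgeRel S Disk Disk.center) (s, Disk.center) = w :=
        (Wedge.pt_eq s s₀).trans hw.symm
      show f (Quot.mk (wedgeRel S Disk Disk.center) (s, Disk.center)) = p ec
      rw [h1, hpec]
    have hex : ∀ s : S, ∃ g : C(Disk, E),
        p.comp g = f.comp (Wedge.mkC s) ∧ g Disk.center = ec :=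
      fun s => (hd ec (f.comp (Wedge.mkC s)) Disk.center (hfs s)).exists
    choose g hgp hgc using hex
    have hgu : ∀ (s : S) (g' : C(Disk, E)), p.comp g' = f.comp (Wedge.mkC s) →
        g' Disk.center = ec → g' = g s :=
      fun s g' h1 h2 => (hd ec _ Disk.center (hfs s)).unique ⟨h1, h2⟩ ⟨hgp s, hgc s⟩
    have hwd : ∀ x y, wedgeRel S Disk Disk.center x y → g x.1 x.2 = g y.1 y.2 := by
      rintro ⟨s, a⟩ ⟨s', a'⟩ (h | ⟨h1, h2⟩)
      · rw [h]
      · simp only at h1 h2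
        rw [h1, h2, hgc, hgc]
    have key : ∀ U : Set E, IsOpen U → ec ∈ U →
        ∃ t : S, ∀ s : S, t < s → ∀ a : Disk, g s a ∈ U := by
      intro U hU hecU
      have hsel : ∀ s : S, ∃ a : Disk, (∃ b : Disk, g s b ∉ U) → g s a ∉ U := by
        intro s
        by_cases h : ∃ b : Disk, g s b ∉ U
        · exact ⟨h.choose, fun _ => h.choose_spec⟩
        · exact ⟨Disk.center, fun h' => absurd h' h⟩
      choose a ha using hsel
      have hΦwd : ∀ x y, wedgeRel S I 0 x y →
          (Quot.mk (wedgeRel S Disk Disk.center) (x.1, Disk.radial (a x.1) x.2)) =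
          Quot.mk (wedgeRel S Disk Disk.center) (y.1, Disk.radial (a y.1) y.2) := by
        rintro ⟨s, t⟩ ⟨s', t'⟩ (h | ⟨h1, h2⟩)
        · rw [h]
        · simp only at h1 h2
          rw [h1, h2]
          simp only [Disk.radial_zero]
          exact Wedge.pt_eq s s'
      set Φ : ArcHedgehog S → DiskHedgehog S :=
        Quot.lift (fun x : S × I =>
          Quot.mk (wedgeRel S Disk Disk.center) (x.1, Disk.radial (a x.1) x.2)) hΦwd with hΦdef
      have hΦcont : Continuous Φ := by
        apply Wedge.continuous_of
        · intro s
          exact (Wedge.mkC s).continuous.comp (Disk.radial (a s)).continuous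
        · intro W hW s' hmem
          obtain ⟨t, ht⟩ := (Wedge.isOpen_iff.mp hW).2
            ⟨s', by simp [hΦdef] at hmem; exact hmem⟩
          exact ⟨t, fun s hs r => ht s hs _⟩
      set F : C(ArcHedgehog S, B) := f.comp ⟨Φ, hΦcont⟩ with hF
      have hFpt : F (Quot.mk (wedgeRel S I 0) (s₀, 0)) = p ec := by
        show f (Quot.mk (wedgeRel S Disk Disk.center) (s₀, Disk.radial (a s₀) 0)) = p ec
        rw [Disk.radial_zero, ← hw, ← hpec]
      obtain ⟨h, ⟨hhp, hh0⟩, hhu⟩ := hp S ec F (Quot.mk (wedgeRel S I 0) (s₀, 0)) hFpt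
      have harcs : ∀ s : S, h.comp (Wedge.mkC s) = (g s).comp (Disk.radial (a s)) := by
        intro s
        have hstart : ((f.comp (Wedge.mkC s)).comp (Disk.radial (a s))) 0 = p ec := by
          simpa using hfs s
        refine (harc ec _ hstart).unique ⟨?_, ?_⟩ ⟨?_, ?_⟩
        · ext r
          have := ContinuousMap.congr_fun hhp (Quot.mk (wedgeRel S I 0) (s, r))
          exact this
        · show h (Quot.mk (wedgeRel S I 0) (s, 0)) = ec
          rw [Wedge.pt_eq s s₀]
          exact hh0
        · ext r
          simpa using ContinuousMap.congr_fun (hgp s) (Disk.radial (a s) r)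
        · simpa using hgc s
      have hopen : IsOpen (h ⁻¹' U) := h.continuous.isOpen_preimage U hU
      have hmem : Quot.mk (wedgeRel S I 0) (s₀, 0) ∈ h ⁻¹' U := by
        show h (Quot.mk (wedgeRel S I 0) (s₀, 0)) ∈ U
        rw [hh0]
        exact hecU
      obtain ⟨t, ht⟩ := (Wedge.isOpen_iff.mp hopen).2 ⟨s₀, hmem⟩
      refine ⟨t, fun s hs b => ?_⟩
      by_contra hb
      have h1 : g s (a s) ∉ U := ha s ⟨b, hb⟩
      have h2 : h (Quot.mk (wedgeRel S I 0) (s, 1)) ∈ U := ht s hs 1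
      have h3 : h (Quot.mk (wedgeRel S I 0) (s, 1)) = g s (a s) := by
        have := ContinuousMap.congr_fun (harcs s) 1
        simp [Wedge.mkC_apply] at this
        exact this
      exact h1 (h3 ▸ h2)
    have hGc : Continuous (fun x : DiskHedgehog S =>
        Quot.lift (fun x : S × Disk => g x.1 x.2) hwd x) := by
      apply Wedge.continuous_of
      · intro s
        exact (g s).continuous
      · intro U hU s' hmem
        exact key U hU (by simpa [hgc] using hmem)
    set G : C(DiskHedgehog S, E) :=
      ⟨fun x => Quot.lift (fun x : S × Disk => g x.1 x.2) hwd x, hGc⟩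
      with hG
    have hGp : p.comp G = f := by
      ext x
      induction x using Quot.ind with
      | _ x =>
        obtain ⟨s, b⟩ := x
        exact ContinuousMap.congr_fun (hgp s) b
    have hGz : G (Quot.mk (wedgeRel S Disk Disk.center) (s₀, a₀')) = e₀ := by
      have e1 : ((f.comp (Wedge.mkC s₀)).comp (Disk.radial a₀')) 0 = p ec := by
        simpa using hfs s₀
      have h1 : (g s₀).comp (Disk.radial a₀') = β.comp symmC := by
        refine (harc ec _ e1).unique ⟨?_, ?_⟩ ⟨?_, ?_⟩
        · ext r
          simpa using ContinuousMap.congr_fun (hgp s₀) (Disk.radial a₀' r)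
        · simpa using hgc s₀
        · ext r
          have := ContinuousMap.congr_fun hβp (symmC r)
          simpa [hδ, symmC, unitInterval.symm_symm] using this
        · simp [symmC, hec]
      have := ContinuousMap.congr_fun h1 1
      simpa [hG, symmC, hβ0] using this
    refine ⟨G, ⟨hGp, hGz⟩, ?_⟩
    rintro G' ⟨hG'p, hG'z⟩
    have hG'w : G' w = ec := by
      have e0 : ((f.comp (Wedge.mkC s₀)).comp δ) 0 = p e₀ := by
        show f (Quot.mk (wedgeRel S Disk Disk.center) (s₀, δ 0)) = p e₀
        rw [hδ0]; exact hz₀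
      have h1 : G'.comp ((Wedge.mkC s₀).comp δ) = β := by
        refine (harc e₀ _ e0).unique ⟨?_, ?_⟩ ⟨hβp, hβ0⟩
        · ext r
          exact
            ContinuousMap.congr_fun hG'p (Quot.mk (wedgeRel S Disk Disk.center) (s₀, δ r))
        · show G' (Quot.mk (wedgeRel S Disk Disk.center) (s₀, δ 0)) = e₀
          rw [hδ0]
          exact hG'z
      have h2 : G' (Quot.mk (wedgeRel S Disk Disk.center) (s₀, δ 1)) = β 1 :=
        ContinuousMap.congr_fun h1 1
      rw [hδ1] at h2
      rw [hw, hec]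
      exact h2
    have hsall : ∀ s : S, G'.comp (Wedge.mkC s) = g s := by
      intro s
      refine hgu s _ ?_ ?_
      · ext b
        exact
          ContinuousMap.congr_fun hG'p (Quot.mk (wedgeRel S Disk Disk.center) (s, b))
      · show G' (Quot.mk (wedgeRel S Disk Disk.center) (s, Disk.center)) = ec
        rw [(Wedge.pt_eq s s₀).trans hw.symm]
        exact hG'w
    ext x
    induction x using Quot.ind with
    | _ x =>
      obtain ⟨s, b⟩ := x
      exact ContinuousMap.congr_fun (hsall s) b
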